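/- For the classical density proportional to e^{δx − εz²/2} on the unit sphere, ⟨z²⟩ = 1/3 − 2ε/45 + 2ε²/945 − δ²/45 + O(3) (up to third order terms in δ and ε). -/

import Mathlib

set_option maxHeartbeats 1000000

open Asymptotics
noncomputable section

/-- Normalizing integral `∫_S e^{δx − εz²/2} dS` over the unit sphere, in
spherical coordinates. -/
def sphDen (δ ε : ℝ) : ℝ :=
  ∫ θ in (0 : ℝ)..Real.pi, ∫ φ in (0 : ℝ)..(2 * Real.pi),
    Real.sin θ *
      Real.exp (δ * (Real.sin θ * Real.cos φ) - ε * Real.cos θ ^ 2 / 2)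

/-- Mean of the observable `g(x,z)` (with `x = sinθ cosφ`, `z = cosθ`) for the
classical density proportional to `e^{δx − εz²/2}` on the unit sphere. -/
def sphAvg (g : ℝ → ℝ → ℝ) (δ ε : ℝ) : ℝ :=
  (∫ θ in (0 : ℝ)..Real.pi, ∫ φ in (0 : ℝ)..(2 * Real.pi),
      Real.sin θ * g (Real.sin θ * Real.cos φ) (Real.cos θ) *
        Real.exp (δ * (Real.sin θ * Real.cos φ) - ε * Real.cos θ ^ 2 / 2))
    / sphDen δ ε

open Real intervalIntegral

noncomputable def rem (v : ℝ) : ℝ := Real.exp v - (1 + v + v^2/2)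

lemma rem_cont : Continuous rem := by unfold rem; fun_prop

lemma rem_bound {v : ℝ} (hv : |v| ≤ 1) : |rem v| ≤ |v|^3 := by
  have h := Real.exp_bound hv (n := 3) (by norm_num)
  have hs : ∑ m ∈ Finset.range 3, v ^ m / m.factorial = 1 + v + v^2/2 := by
    simp [Finset.sum_range_succ]
  rw [hs] at h
  calc |rem v| ≤ |v|^3 * ((3:ℕ).succ / ((3:ℕ).factorial * 3)) := h
    _ ≤ |v|^3 * 1 := by
        apply mul_le_mul_of_nonneg_left _ (by positivity)
        norm_num [Nat.factorial]
    _ = |v|^3 := by ring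

lemma int_cos_poly (A B C : ℝ) :
    ∫ φ in (0:ℝ)..(2*π), (A + B * Real.cos φ + C * Real.cos φ ^ 2) = 2*π*A + π*C := by
  rw [integral_add (by apply Continuous.intervalIntegrable; fun_prop) (by apply Continuous.intervalIntegrable; fun_prop), integral_add (by apply Continuous.intervalIntegrable; fun_prop) (by apply Continuous.intervalIntegrable; fun_prop),
    integral_const, integral_const_mul, integral_const_mul, integral_cos, integral_cos_sq]
  simp [Real.sin_two_pi, Real.cos_two_pi]
  ring

lemma int_sin_cos_pow (n : ℕ) :
    ∫ θ in (0:ℝ)..π, Real.sin θ * Real.cos θ ^ n = (1 - (-1:ℝ)^(n+1))/(n+1) := by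
  have key : ∀ θ : ℝ, HasDerivAt (fun t => -Real.cos t^(n+1)/(n+1))
      (Real.sin θ * Real.cos θ ^ n) θ := by
    intro θ
    have h := ((Real.hasDerivAt_cos θ).pow (n+1)).neg.div_const ((n:ℝ)+1)
    refine h.congr_deriv ?_
    have : ((n:ℝ)+1) ≠ 0 := by positivity
    rw [div_eq_iff this, Nat.add_sub_cancel]
    push_cast
    ring
  rw [intervalIntegral.integral_eq_sub_of_hasDerivAt (fun θ _ => key θ) (by apply Continuous.intervalIntegrable; fun_prop)]
  simp [Real.cos_pi]
  ring

/-- inner split -/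
lemma inner_split (m : ℕ) (δ ε θ : ℝ) :
    (∫ φ in (0:ℝ)..(2*π),
      Real.sin θ * Real.cos θ ^ m * Real.exp (δ*(Real.sin θ*Real.cos φ) - ε*Real.cos θ^2/2))
    = (2*π + π*δ^2/2 * Real.sin θ^2) * (Real.sin θ*Real.cos θ^m)
        - π*ε * (Real.sin θ*Real.cos θ^(m+2)) + (π*ε^2/4)*(Real.sin θ*Real.cos θ^(m+4))
      + ∫ φ in (0:ℝ)..(2*π),
          Real.sin θ * Real.cos θ ^ m * rem (δ*(Real.sin θ*Real.cos φ) - ε*Real.cos θ^2/2) := by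
  set s := Real.sin θ
  set c := Real.cos θ
  have A := s*c^m*(1 - ε*c^2/2 + ε^2*c^4/8)
  have step : (∫ φ in (0:ℝ)..(2*π),
      s * c ^ m * Real.exp (δ*(s*Real.cos φ) - ε*c^2/2))
      = (∫ φ in (0:ℝ)..(2*π),
          ((s*c^m*(1 - ε*c^2/2 + ε^2*c^4/8)) + (s*c^m*(δ*s - δ*ε*s*c^2/2)) * Real.cos φ
            + (s*c^m*(δ^2*s^2/2)) * Real.cos φ ^ 2))
        + ∫ φ in (0:ℝ)..(2*π), s * c ^ m * rem (δ*(s*Real.cos φ) - ε*c^2/2) := by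
    rw [← integral_add (by apply Continuous.intervalIntegrable; fun_prop)
      (by apply Continuous.intervalIntegrable; exact (continuous_const.mul
        (rem_cont.comp (by fun_prop)))) ]
    apply intervalIntegral.integral_congr
    intro φ _
    simp only [rem]
    ring
  rw [step, int_cos_poly]
  ring

lemma Hcont (m : ℕ) (δ ε : ℝ) : Continuous (fun θ : ℝ => ∫ φ in (0:ℝ)..(2*π),
    Real.sin θ * Real.cos θ ^ m * rem (δ*(Real.sin θ*Real.cos φ) - ε*Real.cos θ^2/2)) := by
  apply intervalIntegral.continuous_parametric_intervalIntegral_of_continuous'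
  apply Continuous.mul (by fun_prop)
  exact rem_cont.comp (by fun_prop)

lemma outer_split (m : ℕ) (δ ε : ℝ) :
    (∫ θ in (0:ℝ)..π, ∫ φ in (0:ℝ)..(2*π),
      Real.sin θ * Real.cos θ ^ m * Real.exp (δ*(Real.sin θ*Real.cos φ) - ε*Real.cos θ^2/2))
    = (2*π + π*δ^2/2) * ((1 - (-1:ℝ)^(m+1))/(m+1))
        - (π*ε + π*δ^2/2) * ((1 - (-1:ℝ)^(m+3))/(m+3))
        + (π*ε^2/4) * ((1 - (-1:ℝ)^(m+5))/(m+5))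
      + ∫ θ in (0:ℝ)..π, ∫ φ in (0:ℝ)..(2*π),
          Real.sin θ * Real.cos θ ^ m * rem (δ*(Real.sin θ*Real.cos φ) - ε*Real.cos θ^2/2) := by
  have step1 : (∫ θ in (0:ℝ)..π, ∫ φ in (0:ℝ)..(2*π),
      Real.sin θ * Real.cos θ ^ m * Real.exp (δ*(Real.sin θ*Real.cos φ) - ε*Real.cos θ^2/2))
      = (∫ θ in (0:ℝ)..π,
          ((2*π + π*δ^2/2) * (Real.sin θ*Real.cos θ^m)
            + (-(π*ε) - π*δ^2/2) * (Real.sin θ*Real.cos θ^(m+2))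
            + (π*ε^2/4)*(Real.sin θ*Real.cos θ^(m+4))))
        + ∫ θ in (0:ℝ)..π, ∫ φ in (0:ℝ)..(2*π),
            Real.sin θ * Real.cos θ ^ m * rem (δ*(Real.sin θ*Real.cos φ) - ε*Real.cos θ^2/2) := by
    rw [← integral_add (by apply Continuous.intervalIntegrable; fun_prop)
      ((Hcont m δ ε).intervalIntegrable _ _)]
    apply intervalIntegral.integral_congr
    intro θ _
    beta_reduce
    rw [inner_split]
    have hs : Real.sin θ ^ 2 = 1 - Real.cos θ ^ 2 := Real.sin_sq θ
    simp only [pow_add]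
    rw [hs]
    ring
  rw [step1]
  congr 1
  rw [integral_add (by apply Continuous.intervalIntegrable; fun_prop)
      (by apply Continuous.intervalIntegrable; fun_prop),
    integral_add (by apply Continuous.intervalIntegrable; fun_prop)
      (by apply Continuous.intervalIntegrable; fun_prop),
    integral_const_mul, integral_const_mul, integral_const_mul,
    int_sin_cos_pow, int_sin_cos_pow, int_sin_cos_pow]
  push_cast
  ring

lemma rem_outer_bound (m : ℕ) {δ ε K : ℝ} (hδ : |δ| ≤ K) (hε : |ε| ≤ K) (hK : 2*K ≤ 1) :
    |∫ θ in (0:ℝ)..π, ∫ φ in (0:ℝ)..(2*π),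
        Real.sin θ * Real.cos θ ^ m * rem (δ*(Real.sin θ*Real.cos φ) - ε*Real.cos θ^2/2)|
      ≤ 16*π^2*K^3 := by
  have hK0 : 0 ≤ K := le_trans (abs_nonneg δ) hδ
  have hpt : ∀ θ φ : ℝ,
      |Real.sin θ * Real.cos θ ^ m * rem (δ*(Real.sin θ*Real.cos φ) - ε*Real.cos θ^2/2)|
        ≤ 8*K^3 := by
    intro θ φ
    have hu : |δ*(Real.sin θ*Real.cos φ) - ε*Real.cos θ^2/2| ≤ 2*K := by
      have h1 : |δ*(Real.sin θ*Real.cos φ)| ≤ K := by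
        rw [abs_mul]
        calc |δ| * |Real.sin θ*Real.cos φ| ≤ K * 1 := by
              apply mul_le_mul hδ _ (abs_nonneg _) hK0
              rw [abs_mul]
              exact mul_le_one₀ (Real.abs_sin_le_one θ) (abs_nonneg _) (Real.abs_cos_le_one φ)
          _ = K := mul_one K
      have h2 : |ε*Real.cos θ^2/2| ≤ K := by
        rw [abs_div, abs_mul]
        have : |ε| * |Real.cos θ^2| ≤ K * 1 := by
          apply mul_le_mul hε _ (abs_nonneg _) hK0
          rw [abs_pow]
          exact pow_le_one₀ (abs_nonneg _) (Real.abs_cos_le_one θ)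
        rw [abs_two]
        calc |ε| * |Real.cos θ ^ 2| / 2 ≤ K * 1 / 2 := by linarith
          _ ≤ K := by linarith
      calc |δ*(Real.sin θ*Real.cos φ) - ε*Real.cos θ^2/2|
          ≤ |δ*(Real.sin θ*Real.cos φ)| + |ε*Real.cos θ^2/2| := abs_sub _ _
        _ ≤ 2*K := by linarith
    have hu1 : |δ*(Real.sin θ*Real.cos φ) - ε*Real.cos θ^2/2| ≤ 1 := le_trans hu hK
    have hr := rem_bound hu1
    have hr2 : |rem (δ*(Real.sin θ*Real.cos φ) - ε*Real.cos θ^2/2)| ≤ 8*K^3 := by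
      refine hr.trans ?_
      calc |δ*(Real.sin θ*Real.cos φ) - ε*Real.cos θ^2/2|^3 ≤ (2*K)^3 :=
            pow_le_pow_left₀ (abs_nonneg _) hu 3
        _ = 8*K^3 := by ring
    rw [abs_mul]
    calc |Real.sin θ * Real.cos θ ^ m| * |rem _| ≤ 1 * (8*K^3) := by
          apply mul_le_mul _ hr2 (abs_nonneg _) (by norm_num)
          rw [abs_mul, abs_pow]
          exact mul_le_one₀ (Real.abs_sin_le_one θ)
            (by positivity) (pow_le_one₀ (abs_nonneg _) (Real.abs_cos_le_one θ))
      _ = 8*K^3 := one_mul _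
  have inner : ∀ θ : ℝ,
      |∫ φ in (0:ℝ)..(2*π),
        Real.sin θ * Real.cos θ ^ m * rem (δ*(Real.sin θ*Real.cos φ) - ε*Real.cos θ^2/2)|
      ≤ 16*π*K^3 := by
    intro θ
    have := intervalIntegral.norm_integral_le_of_norm_le_const
      (C := 8*K^3) (a := (0:ℝ)) (b := 2*π)
      (f := fun φ => Real.sin θ * Real.cos θ ^ m * rem (δ*(Real.sin θ*Real.cos φ) - ε*Real.cos θ^2/2))
      (fun φ _ => hpt θ φ)
    rw [Real.norm_eq_abs] at this
    refine this.trans ?_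
    rw [show (2*π - 0 : ℝ) = 2*π by ring, abs_of_nonneg (by positivity : (0:ℝ) ≤ 2*π)]
    ring_nf
    nlinarith [Real.pi_pos, pow_nonneg hK0 3]
  have := intervalIntegral.norm_integral_le_of_norm_le_const
    (C := 16*π*K^3) (a := (0:ℝ)) (b := π)
    (f := fun θ => ∫ φ in (0:ℝ)..(2*π),
        Real.sin θ * Real.cos θ ^ m * rem (δ*(Real.sin θ*Real.cos φ) - ε*Real.cos θ^2/2))
    (fun θ _ => inner θ)
  rw [Real.norm_eq_abs] at this
  refine this.trans ?_
  rw [show (π - 0 : ℝ) = π by ring, abs_of_nonneg Real.pi_pos.le]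
  ring_nf
  nlinarith [Real.pi_pos, pow_nonneg hK0 3]

/-- the expansion
`⟨z²⟩ = 1/3 − 2ε/45 + 2ε²/945 − δ²/45 + O(3)` of the mean of `z²` for the
classical density `∝ e^{δx − εz²/2}` on the unit sphere, up to terms of third
order in `(δ, ε)` jointly. -/
theorem mean_z_sq_expansion :
    (fun p : ℝ × ℝ => sphAvg (fun _ z => z ^ 2) p.1 p.2
        - (1 / 3 - 2 * p.2 / 45 + 2 * p.2 ^ 2 / 945 - p.1 ^ 2 / 45))
      =O[nhds (0 : ℝ × ℝ)] fun p : ℝ × ℝ => ‖p‖ ^ 3 := by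
  rw [Asymptotics.isBigO_iff]
  refine ⟨100, ?_⟩
  filter_upwards [Metric.ball_mem_nhds (0 : ℝ × ℝ) (by norm_num : (0:ℝ) < 1/16)] with p hp
  rw [mem_ball_zero_iff] at hp
  set δ := p.1 with hδdef
  set ε := p.2 with hεdef
  set K := ‖p‖ with hKdef
  have hδ : |δ| ≤ K := by rw [← Real.norm_eq_abs]; exact norm_fst_le p
  have hε : |ε| ≤ K := by rw [← Real.norm_eq_abs]; exact norm_snd_le p
  have hK0 : 0 ≤ K := norm_nonneg p
  have hK : K < 1/16 := hp
  have hK1 : K ≤ 1 := by linarith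
  have hpi1 : π ≤ 4 := Real.pi_le_four
  have hpi2 : 3 < π := Real.pi_gt_three
  -- remainder definitions
  set RN := ∫ θ in (0:ℝ)..π, ∫ φ in (0:ℝ)..(2*π),
      Real.sin θ * Real.cos θ ^ 2 * rem (δ*(Real.sin θ*Real.cos φ) - ε*Real.cos θ^2/2) with hRNdef
  set RD := ∫ θ in (0:ℝ)..π, ∫ φ in (0:ℝ)..(2*π),
      Real.sin θ * Real.cos θ ^ 0 * rem (δ*(Real.sin θ*Real.cos φ) - ε*Real.cos θ^2/2) with hRDdef
  have hRN : |RN| ≤ 16*π^2*K^3 := rem_outer_bound 2 hδ hε (by linarith)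
  have hRD : |RD| ≤ 16*π^2*K^3 := rem_outer_bound 0 hδ hε (by linarith)
  have hK3 : K^3 ≤ 1/4096 := by
    calc K^3 ≤ (1/16)^3 := by
          apply pow_le_pow_left₀ hK0 (le_of_lt hK)
      _ = 1/4096 := by norm_num
  have hRbd : 16*π^2*K^3 ≤ 1/16 := by nlinarith
  -- numerator
  set N := ∫ θ in (0:ℝ)..π, ∫ φ in (0:ℝ)..(2*π),
      Real.sin θ * Real.cos θ ^ 2 * Real.exp (δ*(Real.sin θ*Real.cos φ) - ε*Real.cos θ^2/2) with hNdef
  have hNum : N = (4*π/3 + 2*π*δ^2/15 - 2*π*ε/5 + π*ε^2/14) + RN := by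
    rw [hNdef, outer_split 2 δ ε, ← hRNdef]
    norm_num
    ring
  have hDen : sphDen δ ε = (4*π + 2*π*δ^2/3 - 2*π*ε/3 + π*ε^2/10) + RD := by
    have h0 : sphDen δ ε = ∫ θ in (0:ℝ)..π, ∫ φ in (0:ℝ)..(2*π),
        Real.sin θ * Real.cos θ ^ 0 * Real.exp (δ*(Real.sin θ*Real.cos φ) - ε*Real.cos θ^2/2) := by
      simp only [sphDen, pow_zero, mul_one]
    rw [h0, outer_split 0 δ ε, ← hRDdef]
    norm_num
    ring
  -- denominator lower bound
  have hDpos : 8 ≤ sphDen δ ε := by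
    rw [hDen]
    have h1 : -(1/16 : ℝ) ≤ RD := by
      have := (abs_le.mp (hRD.trans hRbd)).1; linarith
    have he := abs_le.mp (hε.trans hK.le)
    have t1 : 0 ≤ 2*π*δ^2/3 := by positivity
    have t2 : 0 ≤ π*ε^2/10 := by positivity
    have t3 : 2*π*ε/3 ≤ 1/6 := by nlinarith [he.1, he.2]
    linarith
  have hDpos' : (0:ℝ) < sphDen δ ε := by linarith
  -- the target polynomial
  set T := 1/3 - 2*ε/45 + 2*ε^2/945 - δ^2/45 with hTdef
  have hδ2 : δ^2 ≤ K^2 := by rw [← sq_abs]; exact pow_le_pow_left₀ (abs_nonneg _) hδ 2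
  have hε2 : ε^2 ≤ K^2 := by rw [← sq_abs]; exact pow_le_pow_left₀ (abs_nonneg _) hε 2
  have hK2 : K^2 ≤ 1 := by nlinarith
  have hε1 : |ε| ≤ 1 := hε.trans hK1
  have hεsq : ε^2 ≤ 1 := hε2.trans hK2
  have hδsq : δ^2 ≤ 1 := hδ2.trans hK2
  have hT : |T| ≤ 1 := by
    rw [hTdef, abs_le]
    have := abs_le.mp hε1
    constructor <;> [linarith [sq_nonneg δ, sq_nonneg ε]; linarith [sq_nonneg δ, sq_nonneg ε]]
  -- polynomial discrepancy bound
  have m1 : |δ^2*ε| ≤ K^3 := by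
    rw [abs_mul, abs_pow]
    calc |δ|^2 * |ε| ≤ K^2 * K :=
        mul_le_mul (pow_le_pow_left₀ (abs_nonneg _) hδ 2) hε (abs_nonneg _) (by positivity)
      _ = K^3 := by ring
  have m2 : |δ^4| ≤ K^3 := by
    rw [abs_pow]
    calc |δ|^4 ≤ K^4 := pow_le_pow_left₀ (abs_nonneg _) hδ 4
      _ = K^3 * K := by ring
      _ ≤ K^3 * 1 := mul_le_mul_of_nonneg_left hK1 (by positivity)
      _ = K^3 := by ring
  have m3 : |ε^3| ≤ K^3 := by
    rw [abs_pow]; exact pow_le_pow_left₀ (abs_nonneg _) hε 3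
  have m4 : |δ^2*ε^2| ≤ K^3 := by
    rw [abs_mul, abs_pow, abs_pow]
    calc |δ|^2 * |ε|^2 ≤ K^2 * K^2 :=
        mul_le_mul (pow_le_pow_left₀ (abs_nonneg _) hδ 2)
          (pow_le_pow_left₀ (abs_nonneg _) hε 2) (by positivity) (by positivity)
      _ = K^3 * K := by ring
      _ ≤ K^3 * 1 := mul_le_mul_of_nonneg_left hK1 (by positivity)
      _ = K^3 := by ring
  have m5 : |ε^4| ≤ K^3 := by
    rw [abs_pow]
    calc |ε|^4 ≤ K^4 := pow_le_pow_left₀ (abs_nonneg _) hε 4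
      _ = K^3 * K := by ring
      _ ≤ K^3 * 1 := mul_le_mul_of_nonneg_left hK1 (by positivity)
      _ = K^3 := by ring
  have hpoly : |(4*π/3 + 2*π*δ^2/15 - 2*π*ε/5 + π*ε^2/14)
      - T*(4*π + 2*π*δ^2/3 - 2*π*ε/3 + π*ε^2/10)| ≤ K^3 := by
    have heq : (4*π/3 + 2*π*δ^2/15 - 2*π*ε/5 + π*ε^2/14)
        - T*(4*π + 2*π*δ^2/3 - 2*π*ε/3 + π*ε^2/10)
        = π*((2/135)*(δ^2*ε) + (2/135)*(δ^4) + (83/14175)*(ε^3)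
            + (23/28350)*(δ^2*ε^2) - (1/4725)*(ε^4)) := by
      rw [hTdef]; ring
    rw [heq, abs_mul, abs_of_nonneg Real.pi_pos.le]
    have habs : |(2/135)*(δ^2*ε) + (2/135)*(δ^4) + (83/14175)*(ε^3)
        + (23/28350)*(δ^2*ε^2) - (1/4725)*(ε^4)| ≤ (1/4)*K^3 := by
      rw [abs_le]
      constructor <;>
        · have a1 := abs_le.mp m1; have a2 := abs_le.mp m2; have a3 := abs_le.mp m3
          have a4 := abs_le.mp m4; have a5 := abs_le.mp m5
          linarith [a1.1, a1.2, a2.1, a2.2, a3.1, a3.2, a4.1, a4.2, a5.1, a5.2]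
    calc π * |(2/135)*(δ^2*ε) + (2/135)*(δ^4) + (83/14175)*(ε^3)
        + (23/28350)*(δ^2*ε^2) - (1/4725)*(ε^4)| ≤ 4 * ((1/4)*K^3) :=
          mul_le_mul hpi1 habs (abs_nonneg _) (by norm_num)
      _ = K^3 := by ring
  -- assemble
  have havg : sphAvg (fun _ z => z ^ 2) δ ε = N / sphDen δ ε := rfl
  have hdiff : sphAvg (fun _ z => z ^ 2) δ ε - T = (N - T * sphDen δ ε) / sphDen δ ε := by
    rw [havg]
    field_simp
  have hNT : |N - T * sphDen δ ε| ≤ 513 * K^3 := by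
    have hexp : N - T * sphDen δ ε
        = RN - T * RD + ((4*π/3 + 2*π*δ^2/15 - 2*π*ε/5 + π*ε^2/14)
          - T*(4*π + 2*π*δ^2/3 - 2*π*ε/3 + π*ε^2/10)) := by
      rw [hNum, hDen]; ring
    rw [hexp]
    have hTRD : |T * RD| ≤ 16*π^2*K^3 := by
      rw [abs_mul]
      calc |T| * |RD| ≤ 1 * (16*π^2*K^3) :=
          mul_le_mul hT hRD (abs_nonneg _) (by norm_num)
        _ = 16*π^2*K^3 := by ring
    have h12 : |RN - T*RD| ≤ |RN| + |T*RD| := by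
      rw [sub_eq_add_neg]
      exact (abs_add_le _ _).trans (by rw [abs_neg])
    have h13 := abs_add_le (RN - T*RD) ((4*π/3 + 2*π*δ^2/15 - 2*π*ε/5 + π*ε^2/14)
          - T*(4*π + 2*π*δ^2/3 - 2*π*ε/3 + π*ε^2/10))
    have hpisq : π^2 ≤ 16 := by nlinarith
    have hK3n : 0 ≤ K^3 := by positivity
    have hstep : π^2 * K^3 ≤ 16 * K^3 := mul_le_mul_of_nonneg_right hpisq hK3n
    linarith [hpoly, hRN, hTRD, h12, h13, hstep]
  have : |sphAvg (fun _ z => z ^ 2) δ ε - T| ≤ 100 * K^3 := by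
    rw [hdiff, abs_div, abs_of_pos hDpos']
    have s1 : |N - T * sphDen δ ε| / sphDen δ ε ≤ |N - T * sphDen δ ε| / 8 :=
      div_le_div_of_nonneg_left (abs_nonneg _) (by norm_num) hDpos
    have s2 : |N - T * sphDen δ ε| / 8 ≤ (513*K^3)/8 := by linarith
    have hK3n : 0 ≤ K^3 := by positivity
    calc |N - T * sphDen δ ε| / sphDen δ ε ≤ (513*K^3)/8 := s1.trans s2
      _ ≤ 100 * K^3 := by linarith
  calc ‖sphAvg (fun _ z => z ^ 2) δ ε - (1/3 - 2*ε/45 + 2*ε^2/945 - δ^2/45)‖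
      = |sphAvg (fun _ z => z ^ 2) δ ε - T| := by rw [Real.norm_eq_abs, hTdef]
    _ ≤ 100 * K^3 := this
    _ = 100 * ‖K^3‖ := by rw [Real.norm_eq_abs, abs_of_nonneg (by positivity)]
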